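/- Every signed graph (G,σ) that has a spanning even Eulerian subgraph admits a nowhere-zero ℤ₄-flow. -/
import Mathlib


/-- A finite multigraph: a finite vertex type, a finite edge type, and each edge has two
(ordered, as a mere presentation) endpoints.  Each edge `e` consists of two half-edges:
the half-edge at `fst e` (encoded by `false`) and the half-edge at `snd e` (encoded by `true`). -/
structure Multigraph where
  V : Type
  E : Type
  fintypeV : Fintype V
  decEqV : DecidableEq V
  fintypeE : Fintype E
  decEqE : DecidableEq E
  fst : E → V
  snd : E → V

attribute [instance] Multigraph.fintypeV Multigraph.decEqV Multigraph.fintypeE Multigraph.decEqE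

namespace Multigraph

variable (G : Multigraph)

/-- A loopless multigraph. -/
def IsLoopless : Prop := ∀ e, G.fst e ≠ G.snd e

/-- A signature assigns `+1` or `-1` to each edge. -/
def IsSignature (σ : G.E → ℤ) : Prop := ∀ e, σ e = 1 ∨ σ e = -1

/-- An orientation of a signed graph: each half-edge gets a direction `±1`
(`+1` = oriented away from its endpoint), and the two half-edges of an edge `e`
satisfy `τ(h¹)·τ(h²) = -σ(e)`. -/
def IsOrientation (σ : G.E → ℤ) (τ : G.E → Bool → ℤ) : Prop :=
  ∀ e, (τ e false = 1 ∨ τ e false = -1) ∧ (τ e true = 1 ∨ τ e true = -1) ∧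
    τ e false * τ e true = -σ e

/-- The boundary of `f` at the vertex `v` (with respect to the orientation `τ`):
the sum of `τ(h)·f(e_h)` over all half-edges `h` incident with `v`. -/
def boundary (τ : G.E → Bool → ℤ) (f : G.E → ℤ) (v : G.V) : ℤ :=
  ∑ e : G.E, ((if G.fst e = v then τ e false * f e else 0) +
    (if G.snd e = v then τ e true * f e else 0))

/-- `(τ, f)` is a nowhere-zero `k`-flow: `τ` is an orientation, all boundaries vanish,
and `1 ≤ |f e| ≤ k - 1` for every edge. -/
def IsNZFlow (σ : G.E → ℤ) (k : ℕ) (τ : G.E → Bool → ℤ) (f : G.E → ℤ) : Prop :=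
  G.IsOrientation σ τ ∧ (∀ v, G.boundary τ f v = 0) ∧
    ∀ e, 1 ≤ |f e| ∧ |f e| ≤ (k : ℤ) - 1

/-- The signed graph admits a nowhere-zero `k`-flow. -/
def HasNZFlow (σ : G.E → ℤ) (k : ℕ) : Prop := ∃ τ f, G.IsNZFlow σ k τ f

/-- A signed graph is flow-admissible if it admits a nowhere-zero `k`-flow for some `k ≥ 2`. -/
def FlowAdmissible (σ : G.E → ℤ) : Prop := ∃ k, 2 ≤ k ∧ G.HasNZFlow σ k

/-- Degree of `v` in the spanning subgraph with edge set `F`. -/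
def degIn (F : Finset G.E) (v : G.V) : ℕ :=
  (F.filter (fun e => G.fst e = v)).card + (F.filter (fun e => G.snd e = v)).card

/-- Degree of `v` in `G`. -/
def deg (v : G.V) : ℕ := G.degIn Finset.univ v

/-- `u` and `v` are joined by an edge of `F`. -/
def LinkedIn (F : Finset G.E) (u v : G.V) : Prop :=
  ∃ e ∈ F, (G.fst e = u ∧ G.snd e = v) ∨ (G.fst e = v ∧ G.snd e = u)

/-- The spanning subgraph with edge set `F` is connected. -/
def SpanningConnected (F : Finset G.E) : Prop :=
  ∀ u v : G.V, Relation.ReflTransGen (G.LinkedIn F) u v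

/-- The spanning subgraph with edge set `F` is Eulerian: connected with all degrees even. -/
def SpanningEulerian (F : Finset G.E) : Prop :=
  Nonempty G.V ∧ G.SpanningConnected F ∧ ∀ v, Even (G.degIn F v)

/-- The edge set `F` is a Hamiltonian circuit of `G`: a spanning connected 2-regular subgraph. -/
def IsHamCircuit (F : Finset G.E) : Prop :=
  Nonempty G.V ∧ G.SpanningConnected F ∧ ∀ v, G.degIn F v = 2

/-- The set of negative edges of `(G, σ)`. -/
def negEdges (σ : G.E → ℤ) : Finset G.E := Finset.univ.filter (fun e => σ e = -1)

/-- `G` is cubic (3-regular). -/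
def IsCubic : Prop := ∀ v, G.deg v = 3

/-- `G` is properly 3-edge-colorable. -/
def ThreeEdgeColorable : Prop :=
  ∃ c : G.E → Fin 3, ∀ e e', e ≠ e' →
    (G.fst e = G.fst e' ∨ G.fst e = G.snd e' ∨ G.snd e = G.fst e' ∨ G.snd e = G.snd e') →
    c e ≠ c e'

/-- The underlying graph admits a nowhere-zero 4-flow (i.e. the all-positive signed graph does). -/
def FourNZFAdmissible : Prop := G.HasNZFlow (fun _ => 1) 4

/-- The flow number: the least `k ≥ 2` such that `(G,σ)` admits a nowhere-zero `k`-flow. -/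
noncomputable def flowNumber (σ : G.E → ℤ) : ℕ := sInf {k | 2 ≤ k ∧ G.HasNZFlow σ k}

end Multigraph

namespace Multigraph

/-- `(G, σ)` admits a nowhere-zero `ℤ₄`-flow: there is an orientation `τ` and
`f : E(G) → ℤ₄` with `f e ≠ 0` everywhere and vanishing boundary at every vertex. -/
def HasNZFlowZMod4 (G : Multigraph) (σ : G.E → ℤ) : Prop :=
  ∃ (τ : G.E → Bool → ℤ) (f : G.E → ZMod 4),
    G.IsOrientation σ τ ∧ (∀ e, f e ≠ 0) ∧
    ∀ v : G.V,
      (∑ e : G.E, ((if G.fst e = v then ((τ e false : ZMod 4)) * f e else 0) +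
        (if G.snd e = v then ((τ e true : ZMod 4)) * f e else 0))) = 0

end Multigraph

namespace SGAux
open Multigraph

def ifun (a : ZMod 2) : ZMod 4 := 2 * (a.val : ZMod 4)

lemma ifun_zero : ifun 0 = 0 := by decide

lemma ifun_add : ∀ a b : ZMod 2, ifun (a + b) = ifun a + ifun b := by decide

def ihom : ZMod 2 →+ ZMod 4 := ⟨⟨ifun, ifun_zero⟩, ifun_add⟩

lemma mul_ifun : ∀ t : ZMod 4, t = 1 ∨ t = 3 → ∀ a : ZMod 2, t * ifun a = ifun a := by decide

lemma two_mul_int (k : ℤ) : ((2 * k : ℤ) : ZMod 4) = ifun ((k : ℤ) : ZMod 2) := by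
  have l4 : ∀ a : ZMod 4, 2 * (2 * a + 1) = 2 ∧ 2 * (2 * a) = 0 := by decide
  have l2 : ∀ b : ZMod 2, ifun (2 * b + 1) = 2 ∧ ifun (2 * b) = 0 := by decide
  obtain ⟨q, r, hk, hr⟩ : ∃ q r : ℤ, k = 2 * q + r ∧ (r = 0 ∨ r = 1) :=
    ⟨k / 2, k % 2, by omega, by omega⟩
  subst hk
  rcases hr with h | h <;> subst h <;> push_cast <;> try simp only [add_zero]
  · rw [(l4 _).2, (l2 _).2]
  · rw [(l4 _).1, (l2 _).1]

variable (G : Multigraph)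

/-- ZMod 2 boundary of an edge labelling. -/
def bd (x : G.E → ZMod 2) (v : G.V) : ZMod 2 :=
  ∑ e : G.E, ((if G.fst e = v then (1 : ZMod 2) else 0) +
    (if G.snd e = v then (1 : ZMod 2) else 0)) * x e

lemma bd_add (x y : G.E → ZMod 2) (v : G.V) :
    bd G (fun e => x e + y e) v = bd G x v + bd G y v := by
  simp [bd, mul_add, Finset.sum_add_distrib]

lemma bd_sum {ι : Type*} (s : Finset ι) (X : ι → G.E → ZMod 2) (v : G.V) :
    bd G (fun e => ∑ i ∈ s, X i e) v = ∑ i ∈ s, bd G (X i) v := by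
  simp only [bd, Finset.mul_sum]
  rw [Finset.sum_comm]

lemma bd_single (e0 : G.E) (w : G.V) :
    bd G (fun e => if e = e0 then 1 else 0) w =
      (if G.fst e0 = w then 1 else 0) + (if G.snd e0 = w then 1 else 0) := by
  simp [bd, mul_ite, mul_one, mul_zero]

lemma exists_path (F : Finset G.E) {u v : G.V}
    (h : Relation.ReflTransGen (G.LinkedIn F) u v) :
    ∃ x : G.E → ZMod 2, (∀ e, e ∉ F → x e = 0) ∧
      ∀ w, bd G x w = (if u = w then 1 else 0) + (if v = w then 1 else 0) := by
  induction h with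
  | refl =>
      refine ⟨fun _ => 0, fun e _ => rfl, fun w => ?_⟩
      by_cases h : u = w <;> simp [bd, h] <;> decide
  | tail _ hstep ih =>
      rename_i b c _
      obtain ⟨x, hsupp, hbd⟩ := ih
      obtain ⟨e0, he0F, hor⟩ := hstep
      refine ⟨fun e => x e + (if e = e0 then 1 else 0), ?_, ?_⟩
      · intro e he
        have : e ≠ e0 := fun h => he (h ▸ he0F)
        simp [hsupp e he, this]
      · intro w
        rw [bd_add, hbd, bd_single]
        have hco : (if G.fst e0 = w then (1:ZMod 2) else 0) + (if G.snd e0 = w then 1 else 0)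
            = (if b = w then 1 else 0) + (if c = w then 1 else 0) := by
          rcases hor with ⟨h1, h2⟩ | ⟨h1, h2⟩ <;> rw [h1, h2]; ring
        rw [hco]
        by_cases h1 : u = w <;> by_cases h2 : b = w <;> by_cases h3 : c = w <;>
          simp [h1, h2, h3] <;> decide

lemma exists_preimage (F : Finset G.E)
    (hc : ∀ u v : G.V, Relation.ReflTransGen (G.LinkedIn F) u v) (v0 : G.V)
    (b : G.V → ZMod 2) (hb : ∑ v, b v = 0) :
    ∃ g : G.E → ZMod 2, (∀ e, e ∉ F → g e = 0) ∧ ∀ w, bd G g w = b w := by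
  choose X hX1 hX2 using fun v => exists_path G F (hc v0 v)
  refine ⟨fun e => ∑ v, b v * X v e, ?_, ?_⟩
  · intro e he
    simp [fun v => hX1 v e he]
  · intro w
    have hlin : bd G (fun e => ∑ v, b v * X v e) w = ∑ v, b v * bd G (X v) w := by
      simp only [bd, Finset.mul_sum]
      rw [Finset.sum_comm]
      exact Finset.sum_congr rfl fun v _ => Finset.sum_congr rfl fun e _ => by ring
    rw [hlin]
    simp only [fun v => hX2 v w, mul_add]
    rw [Finset.sum_add_distrib]
    have h1 : ∑ v : G.V, b v * (if v0 = w then 1 else 0) = 0 := by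
      rw [← Finset.sum_mul, hb, zero_mul]
    have h2 : ∑ v : G.V, b v * (if v = w then 1 else 0) = b w := by
      simp [mul_ite, mul_one, mul_zero]
    rw [h1, h2, zero_add]

/-- Signed integer boundary of the indicator of `F` at `v`. -/
def N (σ : G.E → ℤ) (F : Finset G.E) (v : G.V) : ℤ :=
  ∑ e : G.E, if e ∈ F then
    ((if G.fst e = v then (1 : ℤ) else 0) + (if G.snd e = v then -σ e else 0)) else 0

lemma zmod2_add_self : ∀ a : ZMod 2, a + a = 0 := by decide

lemma card_filter_eq_sum (F : Finset G.E) (p : G.E → Prop) [DecidablePred p] :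
    ((F.filter p).card : ℕ) = ∑ e : G.E, if e ∈ F ∧ p e then 1 else 0 := by
  rw [show F.filter p = Finset.univ.filter (fun e => e ∈ F ∧ p e) from by ext a; simp,
    Finset.card_filter]

lemma N_even (σ : G.E → ℤ) (hσ : G.IsSignature σ) (F : Finset G.E) (v : G.V)
    (hdeg : Even (G.degIn F v)) : Even (N G σ F v) := by
  have hcast : ((N G σ F v : ℤ) : ZMod 2) = (G.degIn F v : ZMod 2) := by
    have hL : ((N G σ F v : ℤ) : ZMod 2) = ∑ e : G.E, ((if e ∈ F ∧ G.fst e = v then (1 : ZMod 2)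
        else 0) + (if e ∈ F ∧ G.snd e = v then 1 else 0)) := by
      rw [N, Int.cast_sum]
      refine Finset.sum_congr rfl fun e _ => ?_
      have hs : ((-σ e : ℤ) : ZMod 2) = 1 := by
        rcases hσ e with h | h <;> rw [h] <;> decide
      by_cases h1 : e ∈ F <;> by_cases h2 : G.fst e = v <;> by_cases h3 : G.snd e = v <;>
        simp [h1, h2, h3, hs]
    rw [hL, degIn]
    push_cast
    rw [card_filter_eq_sum, card_filter_eq_sum, Finset.sum_add_distrib]
    push_cast
    simp [apply_ite (Nat.cast : ℕ → ZMod 2)]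
  obtain ⟨t, ht⟩ := hdeg
  rw [ht] at hcast
  push_cast at hcast
  rw [zmod2_add_self] at hcast
  obtain ⟨k, hk⟩ := (ZMod.intCast_zmod_eq_zero_iff_dvd _ 2).mp hcast
  exact ⟨k, by omega⟩

lemma N_total (σ : G.E → ℤ) (hσ : G.IsSignature σ) (F : Finset G.E) :
    ∑ v : G.V, N G σ F v = 2 * ((F.filter (fun e => σ e = -1)).card : ℤ) := by
  rw [show (∑ v : G.V, N G σ F v) = ∑ e : G.E, ∑ v : G.V, (if e ∈ F then
      ((if G.fst e = v then (1 : ℤ) else 0) + (if G.snd e = v then -σ e else 0)) else 0)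
    from Finset.sum_comm]
  have h1 : ∀ e : G.E, (∑ v : G.V, (if e ∈ F then
      ((if G.fst e = v then (1 : ℤ) else 0) + (if G.snd e = v then -σ e else 0)) else 0))
      = if e ∈ F ∧ σ e = -1 then 2 else 0 := by
    intro e
    by_cases he : e ∈ F
    · simp only [he, if_true, true_and, Finset.sum_add_distrib, Finset.sum_ite_eq,
        Finset.mem_univ, if_true]
      rcases hσ e with h | h <;> simp [h]
    · simp [he]
  rw [Finset.sum_congr rfl fun e _ => h1 e]
  have h2 : ∀ e : G.E, (if e ∈ F ∧ σ e = -1 then (2:ℤ) else 0)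
      = 2 * (if e ∈ F ∧ σ e = -1 then 1 else 0) := by
    intro e; split <;> ring
  rw [Finset.sum_congr rfl fun e _ => h2 e, ← Finset.mul_sum]
  congr 1
  rw [card_filter_eq_sum]
  push_cast
  simp [apply_ite (Int.ofNat)]

end SGAux

open Multigraph

/-- Every signed graph with a spanning even Eulerian subgraph admits a
nowhere-zero `ℤ₄`-flow. -/
theorem spanning_even_eulerian_has_nz_zmod4_flow
    (G : Multigraph) (hG : G.IsLoopless) (σ : G.E → ℤ) (hσ : G.IsSignature σ)
    (hsee : ∃ F : Finset G.E, G.SpanningEulerian F ∧ Even ((F ∩ G.negEdges σ).card)) :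
    G.HasNZFlowZMod4 σ := by
  classical
  obtain ⟨F, ⟨⟨v0⟩, hconn, hdeg⟩, hevenF⟩ := hsee
  -- the ZMod 4 coefficient of the `snd` half-edge
  have ht : ∀ e, ((-σ e : ℤ) : ZMod 4) = 1 ∨ ((-σ e : ℤ) : ZMod 4) = 3 := by
    intro e; rcases hσ e with h | h <;> rw [h] <;> [right; left] <;> decide
  -- halve N
  have hNe : ∀ v, Even (SGAux.N G σ F v) := fun v => SGAux.N_even G σ hσ F v (hdeg v)
  choose M hM using hNe
  have hM2 : ∀ v, SGAux.N G σ F v = 2 * M v := fun v => by have := hM v; omega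
  -- the ZMod 2 vertex labelling to be realised as a boundary
  have hbsum : (∑ v : G.V, ((M v : ℤ) : ZMod 2)) = 0 := by
    obtain ⟨t, hT⟩ := hevenF
    have hFneg : F ∩ G.negEdges σ = F.filter (fun e => σ e = -1) := by
      ext a; simp [Multigraph.negEdges, Finset.mem_filter, Finset.mem_inter]
    have htot := SGAux.N_total G σ hσ F
    rw [hFneg] at hT
    rw [Finset.sum_congr rfl fun v _ => hM2 v, ← Finset.mul_sum, hT] at htot
    have hsM : ∑ v : G.V, M v = 2 * (t : ℤ) := by push_cast at htot ⊢; omega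
    have hc2 : ((∑ v : G.V, M v : ℤ) : ZMod 2) = 0 := by
      rw [hsM]
      push_cast
      rw [show ((2 : ZMod 2)) = 0 from rfl, zero_mul]
    rw [← hc2, Int.cast_sum]
  obtain ⟨g, hgsupp, hgbd⟩ := SGAux.exists_preimage G F hconn v0 _ hbsum
  -- per-edge correction cycles for edges outside F
  have hY : ∀ e : G.E, ∃ y : G.E → ZMod 2, e ∉ F →
      (y e = 1 ∧ (∀ e', e' ∉ F → e' ≠ e → y e' = 0) ∧ ∀ w, SGAux.bd G y w = 0) := by
    intro e
    by_cases he : e ∈ F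
    · exact ⟨fun _ => 0, fun h => absurd he h⟩
    · obtain ⟨x, hxsupp, hxbd⟩ := SGAux.exists_path G F (hconn (G.fst e) (G.snd e))
      refine ⟨fun e' => x e' + (if e' = e then 1 else 0), fun _ => ⟨?_, ?_, ?_⟩⟩
      · simp [hxsupp e he]
      · intro e' he' hne; simp [hxsupp e' he', hne]
      · intro w
        rw [SGAux.bd_add, hxbd, SGAux.bd_single]
        by_cases h2 : G.fst e = w <;> by_cases h3 : G.snd e = w <;>
          simp [h2, h3] <;> decide
  choose Y hY' using hY
  set q : G.E → ZMod 2 := fun e => ∑ e' ∈ Fᶜ, Y e' e with hq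
  have hq1 : ∀ e, e ∉ F → q e = 1 := by
    intro e he
    show (∑ e' ∈ Fᶜ, Y e' e) = 1
    rw [Finset.sum_eq_single e (fun e' he' hne =>
      ((hY' e' (Finset.mem_compl.mp he')).2.1 e he (Ne.symm hne)))
      (fun h => absurd (Finset.mem_compl.mpr he) h)]
    exact (hY' e he).1
  have hqbd : ∀ w, SGAux.bd G q w = 0 := by
    intro w
    show SGAux.bd G (fun e => ∑ e' ∈ Fᶜ, Y e' e) w = 0
    rw [SGAux.bd_sum]
    exact Finset.sum_eq_zero fun e' he' => (hY' e' (Finset.mem_compl.mp he')).2.2 w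
  set w : G.E → ZMod 2 := fun e => g e + q e with hw
  have hwbd : ∀ v, SGAux.bd G w v = ((M v : ℤ) : ZMod 2) := by
    intro v
    show SGAux.bd G (fun e => g e + q e) v = _
    rw [SGAux.bd_add, hgbd, hqbd, add_zero]
  -- the flow
  refine ⟨fun e b => cond b (-σ e) 1,
    fun e => (if e ∈ F then (1 : ZMod 4) else 0) + SGAux.ifun (w e), ?_, ?_, ?_⟩
  · intro e
    refine ⟨Or.inl rfl, ?_, ?_⟩
    · show -σ e = 1 ∨ -σ e = -1
      rcases hσ e with h | h <;> rw [h] <;> [right; left] <;> ring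
    · show 1 * -σ e = -σ e
      ring
  · intro e
    by_cases he : e ∈ F
    · simp only [he, if_true]
      exact (by decide : ∀ a : ZMod 2, (1 : ZMod 4) + SGAux.ifun a ≠ 0) (w e)
    · have hwe : w e = 1 := by
        show g e + q e = 1
        rw [hgsupp e he, hq1 e he, zero_add]
      simp only [he, if_false, zero_add, hwe]
      decide
  · intro v
    show (∑ e : G.E, ((if G.fst e = v then ((1 : ℤ) : ZMod 4) *
        ((if e ∈ F then (1 : ZMod 4) else 0) + SGAux.ifun (w e)) else 0) +
      (if G.snd e = v then ((-σ e : ℤ) : ZMod 4) *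
        ((if e ∈ F then (1 : ZMod 4) else 0) + SGAux.ifun (w e)) else 0))) = 0
    have expand : ∀ (p : Prop) [Decidable p] (t fe : ZMod 4),
        (if p then t * fe else 0) = (if p then t else 0) * fe := by
      intros p _ t fe; split <;> simp
    simp only [expand, ← add_mul]
    -- split f into the indicator part and the ifun part
    have hsplit : ∀ e : G.E,
        ((if G.fst e = v then ((1 : ℤ) : ZMod 4) else 0) +
          (if G.snd e = v then ((-σ e : ℤ) : ZMod 4) else 0)) *
          ((if e ∈ F then (1 : ZMod 4) else 0) + SGAux.ifun (w e))
        = (if e ∈ F then ((if G.fst e = v then ((1 : ℤ) : ZMod 4) else 0) +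
            (if G.snd e = v then ((-σ e : ℤ) : ZMod 4) else 0)) else 0) +
          SGAux.ifun (((if G.fst e = v then (1 : ZMod 2) else 0) +
            (if G.snd e = v then 1 else 0)) * w e) := by
      intro e
      rw [mul_add]
      congr 1
      · by_cases h1 : e ∈ F <;> simp [h1]
      · by_cases h1 : G.fst e = v <;> by_cases h2 : G.snd e = v
        · rw [if_pos h1, if_pos h2, if_pos h1, if_pos h2, Int.cast_one, add_mul, one_mul,
            SGAux.mul_ifun _ (ht e), ← SGAux.ifun_add]
          congr 1
          ring
        · rw [if_pos h1, if_neg h2, if_pos h1, if_neg h2, add_zero, add_zero, Int.cast_one,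
            one_mul, one_mul]
        · rw [if_neg h1, if_pos h2, if_neg h1, if_pos h2, zero_add, zero_add,
            SGAux.mul_ifun _ (ht e), one_mul]
        · rw [if_neg h1, if_neg h2, if_neg h1, if_neg h2]
          simp [SGAux.ifun_zero]
    rw [Finset.sum_congr rfl fun e _ => hsplit e, Finset.sum_add_distrib]
    have hpart1 : (∑ e : G.E, (if e ∈ F then ((if G.fst e = v then ((1 : ℤ) : ZMod 4) else 0) +
        (if G.snd e = v then ((-σ e : ℤ) : ZMod 4) else 0)) else 0))
        = SGAux.ifun ((M v : ℤ) : ZMod 2) := by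
      have hNc : ((SGAux.N G σ F v : ℤ) : ZMod 4) = ∑ e : G.E,
          (if e ∈ F then ((if G.fst e = v then ((1 : ℤ) : ZMod 4) else 0) +
            (if G.snd e = v then ((-σ e : ℤ) : ZMod 4) else 0)) else 0) := by
        rw [SGAux.N, Int.cast_sum]
        refine Finset.sum_congr rfl fun e _ => ?_
        by_cases h1 : e ∈ F <;> by_cases h2 : G.fst e = v <;> by_cases h3 : G.snd e = v <;>
          simp [h1, h2, h3]
      rw [← hNc, hM2 v, SGAux.two_mul_int]
    rw [hpart1]
    have hpart2 : (∑ e : G.E, SGAux.ifun (((if G.fst e = v then (1 : ZMod 2) else 0) +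
        (if G.snd e = v then 1 else 0)) * w e)) = SGAux.ifun (SGAux.bd G w v) := by
      rw [SGAux.bd]
      exact (map_sum SGAux.ihom _ _).symm
    rw [hpart2, hwbd v, ← SGAux.ifun_add, SGAux.zmod2_add_self, SGAux.ifun_zero]
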